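/- Let G be a finite simple graph on vertex set V that is 2-degenerate, witnessed by a linear ordering of V in which every vertex has at most 2 neighbors occurring later in the ordering. Let H be the bipartite graph whose vertex set consists of two disjoint copies V^R and V^B of V, in which u^R ∈ V^R is adjacent to v^B ∈ V^B if and only if v belongs to the closed neighborhood N_G[u] of u in G. Then H is 3-degenerate: there exists a linear ordering of the vertices of H in which every vertex has at most 3 neighbors occurring later in the ordering. -/

import Mathlib

/-- If `G` is `2`-degenerate (witnessed by a strict total order in which every vertex has
at most `2` later neighbors), then the bipartite incidence graph `H` of closed
neighborhoods on two copies of `V` is `3`-degenerate. -/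
theorem stmt_10 {V : Type*} [Fintype V] (G : SimpleGraph V)
    (lt₀ : V → V → Prop) (h₀ : IsStrictTotalOrder V lt₀)
    (hdeg : ∀ v : V, {u : V | G.Adj v u ∧ lt₀ v u}.ncard ≤ 2)
    (H : SimpleGraph (V ⊕ V))
    (hH1 : ∀ u v : V, H.Adj (Sum.inl u) (Sum.inr v) ↔ (v = u ∨ G.Adj u v))
    (hH2 : ∀ u v : V, ¬ H.Adj (Sum.inl u) (Sum.inl v))
    (hH3 : ∀ u v : V, ¬ H.Adj (Sum.inr u) (Sum.inr v)) :
    ∃ lt : (V ⊕ V) → (V ⊕ V) → Prop, IsStrictTotalOrder (V ⊕ V) lt ∧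
      ∀ x : V ⊕ V, {y : V ⊕ V | H.Adj x y ∧ lt x y}.ncard ≤ 3 := by
  classical
  have hirr : ∀ a : V, ¬ lt₀ a a := h₀.irrefl
  have htrans : ∀ a b c : V, lt₀ a b → lt₀ b c → lt₀ a c := h₀.trans
  have htri : ∀ a b : V, lt₀ a b ∨ a = b ∨ lt₀ b a := fun a b => by
    by_cases h1 : lt₀ a b
    · exact Or.inl h1
    by_cases h2 : lt₀ b a
    · exact Or.inr (Or.inr h2)
    exact Or.inr (Or.inl (h₀.trichotomous a b h1 h2))
  -- the order: compare underlying vertices; put `inr v` just before `inl v`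
  set lt : (V ⊕ V) → (V ⊕ V) → Prop := fun x y =>
    match x, y with
    | Sum.inl u, Sum.inl v => lt₀ u v
    | Sum.inl u, Sum.inr v => lt₀ u v
    | Sum.inr u, Sum.inl v => lt₀ u v ∨ u = v
    | Sum.inr u, Sum.inr v => lt₀ u v
    with hlt
  refine ⟨lt, { irrefl := ?irr, trans := ?tr, trichotomous := ?tri }, ?main⟩
  case irr =>
    rintro (a | a) h
    · exact hirr a h
    · exact hirr a h
  case tr =>
    rintro (a | a) (b | b) (c | c) h1 h2 <;> simp only [hlt] at h1 h2 ⊢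
    · exact htrans a b c h1 h2
    · exact htrans a b c h1 h2
    · rcases h2 with h2 | rfl
      · exact htrans a b c h1 h2
      · exact h1
    · exact htrans a b c h1 h2
    · rcases h1 with h1 | rfl
      · exact Or.inl (htrans a b c h1 h2)
      · exact Or.inl h2
    · rcases h1 with h1 | rfl
      · exact htrans a b c h1 h2
      · exact h2
    · rcases h2 with h2 | rfl
      · exact Or.inl (htrans a b c h1 h2)
      · exact Or.inl h1
    · exact htrans a b c h1 h2
  case tri =>
    rintro (a | a) (b | b) <;> simp only [hlt]
    · rcases htri a b with h | h | h
      · exact fun h1 _ => absurd h h1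
      · exact fun _ _ => by rw [h]
      · exact fun _ h2 => absurd h h2
    · rcases htri a b with h | h | h
      · exact fun h1 _ => absurd h h1
      · exact fun _ h2 => absurd (Or.inr h.symm) h2
      · exact fun _ h2 => absurd (Or.inl h) h2
    · rcases htri a b with h | h | h
      · exact fun h1 _ => absurd (Or.inl h) h1
      · exact fun h1 _ => absurd (Or.inr h) h1
      · exact fun _ h2 => absurd h h2
    · rcases htri a b with h | h | h
      · exact fun h1 _ => absurd h h1
      · exact fun _ _ => by rw [h]
      · exact fun _ h2 => absurd h h2
  case main =>
    rintro (u | v)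
    · -- later neighbors of `inl u`
      have heq : {y : V ⊕ V | H.Adj (Sum.inl u) y ∧ lt (Sum.inl u) y}
          = Sum.inr '' {v : V | G.Adj u v ∧ lt₀ u v} := by
        ext (w | w)
        · simp only [Set.mem_setOf_eq, Set.mem_image]
          constructor
          · rintro ⟨h, -⟩; exact absurd h (hH2 u w)
          · rintro ⟨z, -, h⟩; exact absurd h (by simp)
        · simp only [Set.mem_setOf_eq, Set.mem_image, hH1, hlt]
          constructor
          · rintro ⟨h1 | h1, h2⟩
            · exact absurd (h1 ▸ h2) (hirr u)
            · exact ⟨w, ⟨h1, h2⟩, rfl⟩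
          · rintro ⟨z, ⟨h1, h2⟩, hz⟩
            cases hz
            exact ⟨Or.inr h1, h2⟩
      rw [heq, Set.ncard_image_of_injective _ Sum.inr_injective]
      exact le_trans (hdeg u) (by norm_num)
    · -- later neighbors of `inr v`
      have hsub : {y : V ⊕ V | H.Adj (Sum.inr v) y ∧ lt (Sum.inr v) y}
          ⊆ insert (Sum.inl v) (Sum.inl '' {u : V | G.Adj v u ∧ lt₀ v u}) := by
        rintro (w | w) ⟨h1, h2⟩
        · have hadj : v = w ∨ G.Adj w v := (hH1 w v).1 h1.symm
          simp only [hlt] at h2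
          rcases h2 with h2 | rfl
          · rcases hadj with rfl | hadj
            · exact absurd h2 (hirr v)
            · exact Set.mem_insert_iff.2 (Or.inr ⟨w, ⟨hadj.symm, h2⟩, rfl⟩)
          · exact Set.mem_insert _ _
        · exact absurd h1 (hH3 v w)
      calc {y : V ⊕ V | H.Adj (Sum.inr v) y ∧ lt (Sum.inr v) y}.ncard
          ≤ (insert (Sum.inl v) (Sum.inl '' {u : V | G.Adj v u ∧ lt₀ v u})).ncard :=
            Set.ncard_le_ncard hsub (Set.toFinite _)
        _ ≤ (Sum.inl '' {u : V | G.Adj v u ∧ lt₀ v u}).ncard + 1 :=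
            Set.ncard_insert_le _ _
        _ = {u : V | G.Adj v u ∧ lt₀ v u}.ncard + 1 := by
            rw [Set.ncard_image_of_injective _ Sum.inl_injective]
        _ ≤ 3 := by have := hdeg v; omega
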